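/- Let p ≥ 1, 0 ≤ M < 1, and set X± = 2^{p−1}·[[1 − 1/√(1−M²), ±√(M²/(1−M²))],[±√(M²/(1−M²)), 1 − 1/√(1−M²)]] and Y = 0. Then both C_{z,p} − Y⊗I₂ − I₂⊗X±ᵀ and C_{z,p} − X±⊗I₂ − I₂⊗Yᵀ are positive semidefinite, where C_{z,p} = diag(0, 2^p, 2^p, 0) ∈ M₄(ℂ). -/

import Mathlib

open Matrix
open scoped ComplexOrder

noncomputable section

/-- Partial trace over the second tensor factor of `M₄(ℂ) ≅ M₂(ℂ) ⊗ M₂(ℂ)`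
(index ordering `(i,k) ↦ 2*i + k`). -/
def ptrace2 (A : Matrix (Fin 4) (Fin 4) ℂ) : Matrix (Fin 2) (Fin 2) ℂ :=
  !![A 0 0 + A 1 1, A 0 2 + A 1 3; A 2 0 + A 3 1, A 2 2 + A 3 3]

/-- Partial trace over the first tensor factor. -/
def ptrace1 (A : Matrix (Fin 4) (Fin 4) ℂ) : Matrix (Fin 2) (Fin 2) ℂ :=
  !![A 0 0 + A 2 2, A 0 1 + A 2 3; A 1 0 + A 3 2, A 1 1 + A 3 3]

/-- Kronecker product `M₂(ℂ) × M₂(ℂ) → M₄(ℂ)` with index ordering `(i,k) ↦ 2*i + k`. -/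
def kron (A B : Matrix (Fin 2) (Fin 2) ℂ) : Matrix (Fin 4) (Fin 4) ℂ :=
  !![A 0 0 * B 0 0, A 0 0 * B 0 1, A 0 1 * B 0 0, A 0 1 * B 0 1;
     A 0 0 * B 1 0, A 0 0 * B 1 1, A 0 1 * B 1 0, A 0 1 * B 1 1;
     A 1 0 * B 0 0, A 1 0 * B 0 1, A 1 1 * B 0 0, A 1 1 * B 0 1;
     A 1 0 * B 1 0, A 1 0 * B 1 1, A 1 1 * B 1 0, A 1 1 * B 1 1]

def σx : Matrix (Fin 2) (Fin 2) ℂ := !![0, 1; 1, 0]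
def σy : Matrix (Fin 2) (Fin 2) ℂ := !![0, -Complex.I; Complex.I, 0]
def σz : Matrix (Fin 2) (Fin 2) ℂ := !![1, 0; 0, -1]

/-- The symmetric cost operator `C_{symm,p}`. -/
def Csymm (p : ℝ) : Matrix (Fin 4) (Fin 4) ℂ :=
  !![(((2:ℝ)^p : ℝ) : ℂ), 0, 0, -(((2:ℝ)^p : ℝ) : ℂ);
     0, (((2:ℝ)^(p+1) : ℝ) : ℂ), 0, 0;
     0, 0, (((2:ℝ)^(p+1) : ℝ) : ℂ), 0;
     -(((2:ℝ)^p : ℝ) : ℂ), 0, 0, (((2:ℝ)^p : ℝ) : ℂ)]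

/-- The single-observable cost operator `C_{z,p} = diag(0, 2^p, 2^p, 0)`. -/
def Cz (p : ℝ) : Matrix (Fin 4) (Fin 4) ℂ :=
  !![0, 0, 0, 0;
     0, (((2:ℝ)^p : ℝ) : ℂ), 0, 0;
     0, 0, (((2:ℝ)^p : ℝ) : ℂ), 0;
     0, 0, 0, 0]

set_option maxHeartbeats 1000000 in
/-- the Kantorovich potentials `X± , Y = 0` satisfy both dual constraints
for the cost `C_{z,p} = diag(0,2^p,2^p,0)`. -/
theorem stmt_9 (p : ℝ) (hp : 1 ≤ p) (M : ℝ) (hM₁ : 0 ≤ M) (hM₂ : M < 1)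
    (s : ℝ) (hs : s = 1 ∨ s = -1)
    (X : Matrix (Fin 2) (Fin 2) ℂ)
    (hX : X = (((2:ℝ)^(p-1) : ℝ) : ℂ) •
      !![((1 - 1 / Real.sqrt (1 - M^2) : ℝ) : ℂ), ((s * Real.sqrt (M^2 / (1 - M^2)) : ℝ) : ℂ);
         ((s * Real.sqrt (M^2 / (1 - M^2)) : ℝ) : ℂ), ((1 - 1 / Real.sqrt (1 - M^2) : ℝ) : ℂ)])
    (Y : Matrix (Fin 2) (Fin 2) ℂ) (hY : Y = 0) :
    (Cz p - kron Y 1 - kron 1 Xᵀ).PosSemidef ∧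
    (Cz p - kron X 1 - kron 1 Yᵀ).PosSemidef := by
  subst hX hY
  have hM2' : 0 < 1 - M^2 := by nlinarith
  have hs2 : s^2 = 1 := by rcases hs with rfl | rfl <;> norm_num
  set t := Real.sqrt (1 - M^2) with htdef
  have ht0 : 0 < t := Real.sqrt_pos.mpr hM2'
  have htsq : t^2 = 1 - M^2 := Real.sq_sqrt hM2'.le
  have ht1 : t ≤ 1 := Real.sqrt_le_one.mpr (by nlinarith)
  have hr : Real.sqrt (M^2/(1-M^2)) = M / t := by
    rw [htdef, Real.sqrt_div (sq_nonneg M), Real.sqrt_sq hM₁]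
  set q := (2:ℝ)^(p-1) with hqdef
  have hq0 : (0:ℝ) < q := Real.rpow_pos_of_pos (by norm_num) _
  have h2p : (2:ℝ)^p = 2*q := by
    rw [hqdef, Real.rpow_sub (by norm_num), Real.rpow_one]
    field_simp
  have hinv : 1 ≤ 1/t := one_le_one_div ht0 ht1
  set u := Real.sqrt (q*(1/t-1)) with hudef
  set v := Real.sqrt (q*(1/t+1)) with hvdef
  have hu : u^2 = q*(1/t-1) := Real.sq_sqrt (by nlinarith)
  have hv : v^2 = q*(1/t+1) := Real.sq_sqrt (by positivity)
  have huv : u*v = q*(M/t) := by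
    rw [hudef, hvdef, ← Real.sqrt_mul (by nlinarith)]
    have e : (q*(1/t-1))*(q*(1/t+1)) = (q*(M/t))^2 := by
      field_simp
      linear_combination (-1) * htsq
    rw [e, Real.sqrt_sq (by positivity)]
  constructor
  · have hB : Cz p - kron 0 1 - kron 1 ((((2:ℝ)^(p-1) : ℝ) : ℂ) •
      !![((1 - 1 / Real.sqrt (1 - M^2) : ℝ) : ℂ), ((s * Real.sqrt (M^2 / (1 - M^2)) : ℝ) : ℂ);
         ((s * Real.sqrt (M^2 / (1 - M^2)) : ℝ) : ℂ), ((1 - 1 / Real.sqrt (1 - M^2) : ℝ) : ℂ)])ᵀ =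
      (!![(u:ℂ), (-(s*v) : ℝ), 0, 0; 0, 0, 0, 0;
          0, 0, (v:ℂ), (-(s*u) : ℝ); 0, 0, 0, 0] : Matrix (Fin 4) (Fin 4) ℂ)ᴴ *
      !![(u:ℂ), (-(s*v) : ℝ), 0, 0; 0, 0, 0, 0;
          0, 0, (v:ℂ), (-(s*u) : ℝ); 0, 0, 0, 0] := by
      rw [← htdef, ← hqdef, hr]
      ext i j
      fin_cases i <;> fin_cases j <;>
        simp [Cz, kron, Matrix.mul_apply, Fin.sum_univ_four, Matrix.one_apply,
          Matrix.zero_apply, Matrix.vecHead, Matrix.vecTail, Complex.conj_ofReal] <;>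
        norm_cast <;>
        first
          | linear_combination -hu
          | linear_combination s*huv
          | linear_combination -s*huv
          | linear_combination h2p - hv
          | linear_combination h2p - v^2*hs2 - hv
          | linear_combination -u^2*hs2 - hu
    rw [hB]
    exact Matrix.posSemidef_conjTranspose_mul_self _
  · have hB : Cz p - kron ((((2:ℝ)^(p-1) : ℝ) : ℂ) •
      !![((1 - 1 / Real.sqrt (1 - M^2) : ℝ) : ℂ), ((s * Real.sqrt (M^2 / (1 - M^2)) : ℝ) : ℂ);
         ((s * Real.sqrt (M^2 / (1 - M^2)) : ℝ) : ℂ), ((1 - 1 / Real.sqrt (1 - M^2) : ℝ) : ℂ)]) 1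
      - kron 1 (0 : Matrix (Fin 2) (Fin 2) ℂ)ᵀ =
      (!![(u:ℂ), 0, (-(s*v) : ℝ), 0; 0, (v:ℂ), 0, (-(s*u) : ℝ);
          0, 0, 0, 0; 0, 0, 0, 0] : Matrix (Fin 4) (Fin 4) ℂ)ᴴ *
      !![(u:ℂ), 0, (-(s*v) : ℝ), 0; 0, (v:ℂ), 0, (-(s*u) : ℝ);
          0, 0, 0, 0; 0, 0, 0, 0] := by
      rw [← htdef, ← hqdef, hr]
      ext i j
      fin_cases i <;> fin_cases j <;>
        simp [Cz, kron, Matrix.mul_apply, Fin.sum_univ_four, Matrix.one_apply,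
          Matrix.zero_apply, Matrix.vecHead, Matrix.vecTail, Complex.conj_ofReal] <;>
        norm_cast <;>
        first
          | linear_combination -hu
          | linear_combination s*huv
          | linear_combination -s*huv
          | linear_combination h2p - hv
          | linear_combination h2p - v^2*hs2 - hv
          | linear_combination -u^2*hs2 - hu
    rw [hB]
    exact Matrix.posSemidef_conjTranspose_mul_self _
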